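/- For every integer n ≥ 3, the undirected binary de Bruijn graph B(2,n) admits a 1-identifying code. -/

import Mathlib

/-- The undirected de Bruijn graph `B(d,n)`: vertices are strings of length `n`
over the alphabet `{0, ..., d-1}`, and two distinct strings `x`, `y` are adjacent
iff `x_{i+1} = y_i` for all valid `i`, or `y_{i+1} = x_i` for all valid `i`. -/
def deBruijnGraph (d n : ℕ) : SimpleGraph (Fin n → Fin d) where
  Adj x y := x ≠ y ∧
    ((∀ i : Fin n, ∀ h : (i : ℕ) + 1 < n, x ⟨(i : ℕ) + 1, h⟩ = y i) ∨
     (∀ i : Fin n, ∀ h : (i : ℕ) + 1 < n, y ⟨(i : ℕ) + 1, h⟩ = x i))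
  symm := ⟨fun x y ⟨hxy, h⟩ => ⟨hxy.symm, h.symm⟩⟩
  loopless := ⟨fun x ⟨hxx, _⟩ => hxx rfl⟩

/-- The ball of radius `t` around a vertex `x`. -/
def ball {V : Type*} (G : SimpleGraph V) (t : ℕ) (x : V) : Set V :=
  {y | G.dist x y ≤ t}

/-- A set `S` of vertices is a `t`-identifying code if every ball of radius `t`
meets `S`, and distinct vertices have distinct identifying sets `B_t(x) ∩ S`. -/
def IsIdentifyingCode {V : Type*} (G : SimpleGraph V) (t : ℕ) (S : Set V) : Prop :=
  (∀ x : V, (ball G t x ∩ S).Nonempty) ∧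
  ∀ x y : V, x ≠ y → ball G t x ∩ S ≠ ball G t y ∩ S

namespace DBwork
open SimpleGraph

variable {n : ℕ}

/-- Left shift of a string, appending bit `a` at the end. -/
def shf (n : ℕ) (x : Fin n → Fin 2) (a : Fin 2) : Fin n → Fin 2 :=
  fun i => if h : (i : ℕ) + 1 < n then x ⟨(i : ℕ) + 1, h⟩ else a

lemma adj_iff (hn : 1 ≤ n) (x z : Fin n → Fin 2) :
    (deBruijnGraph 2 n).Adj x z ↔
      x ≠ z ∧ ((∃ a, z = shf n x a) ∨ (∃ a, x = shf n z a)) := by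
  constructor
  · rintro ⟨hne, h | h⟩
    · refine ⟨hne, Or.inl ⟨z ⟨n - 1, by omega⟩, funext fun i => ?_⟩⟩
      unfold shf
      split_ifs with hh
      · exact (h i hh).symm
      · congr 1
        have hi := i.isLt
        exact Fin.ext (by simp only [Fin.val_mk]; omega)
    · refine ⟨hne, Or.inr ⟨x ⟨n - 1, by omega⟩, funext fun i => ?_⟩⟩
      unfold shf
      split_ifs with hh
      · exact (h i hh).symm
      · congr 1
        have hi := i.isLt
        exact Fin.ext (by simp only [Fin.val_mk]; omega)
  · rintro ⟨hne, h | h⟩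
    · obtain ⟨a, rfl⟩ := h
      exact ⟨hne, Or.inl fun i hh => by simp [shf, hh]⟩
    · obtain ⟨a, ha⟩ := h
      refine ⟨hne, Or.inr fun i hh => ?_⟩
      rw [ha]; simp [shf, hh]

lemma reach_shf (hn : 1 ≤ n) (x : Fin n → Fin 2) (a : Fin 2) :
    (deBruijnGraph 2 n).Reachable x (shf n x a) := by
  by_cases h : x = shf n x a
  · exact h ▸ Reachable.refl x
  · exact ((adj_iff hn x _).2 ⟨h, Or.inl ⟨a, rfl⟩⟩).reachable

lemma reach (hn : 1 ≤ n) (x y : Fin n → Fin 2) :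
    (deBruijnGraph 2 n).Reachable x y := by
  set y' : ℕ → Fin 2 := fun k => if h : k < n then y ⟨k, h⟩ else 0 with hy'
  set f : ℕ → (Fin n → Fin 2) := fun k i =>
    if h : (i : ℕ) + k < n then x ⟨(i : ℕ) + k, h⟩ else y' ((i : ℕ) + k - n) with hf
  have hstep : ∀ k, f (k + 1) = shf n (f k) (y' k) := by
    intro k
    funext i
    have hi := i.isLt
    simp only [hf, shf]
    split_ifs with h1 h2 h3 <;> try (first | rfl | omega)
    · congr 1; exact Fin.ext (by simp only [Fin.val_mk]; omega)
    · congr 1; omega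
    · congr 1; omega
  have hr : ∀ k, (deBruijnGraph 2 n).Reachable x (f k) := by
    intro k
    induction k with
    | zero =>
      have : f 0 = x := by
        funext i; have := i.isLt; simp only [hf]
        rw [dif_pos (by omega)]
        exact congrArg x (Fin.ext (by simp))
      rw [this]
    | succ k ih =>
      rw [hstep k]
      exact ih.trans (reach_shf hn (f k) (y' k))
  have hfn : f n = y := by
    funext i; have := i.isLt
    simp only [hf, hy']
    rw [dif_neg (by omega), dif_pos (by omega)]
    congr 1; exact Fin.ext (by simp only [Fin.val_mk]; omega)
  exact hfn ▸ hr n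


lemma mem_ball_iff (hn : 1 ≤ n) (x z : Fin n → Fin 2) :
    z ∈ ball (deBruijnGraph 2 n) 1 x ↔
      z = x ∨ (∃ a, z = shf n x a) ∨ (∃ a, x = shf n z a) := by
  have hreach := reach hn x z
  constructor
  · intro hz
    have hd : (deBruijnGraph 2 n).dist x z ≤ 1 := hz
    interval_cases h : (deBruijnGraph 2 n).dist x z
    · exact Or.inl (hreach.dist_eq_zero_iff.mp h).symm
    · have := dist_eq_one_iff_adj.mp h
      rw [adj_iff hn] at this
      exact Or.inr this.2
  · intro hz
    by_cases he : z = x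
    · subst he
      show (deBruijnGraph 2 n).dist z z ≤ 1
      rw [SimpleGraph.dist_self]
      omega
    · have hadj : (deBruijnGraph 2 n).Adj x z := by
        rw [adj_iff hn]
        exact ⟨fun h => he h.symm, hz.resolve_left he⟩
      show (deBruijnGraph 2 n).dist x z ≤ 1
      rw [dist_eq_one_iff_adj.mpr hadj]

lemma two_ne (c : Fin 2) : 1 - c ≠ c := by fin_cases c <;> decide

lemma two_sub (a b : Fin 2) (h : 1 - a = b) : a = 1 - b := by
  subst h; fin_cases a <;> rfl

lemma two_eq {a c : Fin 2} (h : a ≠ c) : a = 1 - c := by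
  fin_cases a <;> fin_cases c <;> simp_all <;> rfl

lemma shf_apply_of_lt (x : Fin n → Fin 2) (a : Fin 2) (i : Fin n) (h : (i : ℕ) + 1 < n) :
    shf n x a i = x ⟨(i : ℕ) + 1, h⟩ := dif_pos h

lemma shf_apply_last (x : Fin n → Fin 2) (a : Fin 2) (i : Fin n) (h : ¬ (i : ℕ) + 1 < n) :
    shf n x a i = a := dif_neg h

set_option maxHeartbeats 1000000 in
lemma aux (hn : 3 ≤ n) (x y : Fin n → Fin 2)
    (hb : ball (deBruijnGraph 2 n) 1 x = ball (deBruijnGraph 2 n) 1 y)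
    (hxy : x ≠ y) (a : Fin 2) (hy : y = shf n x a) : False := by
  have hn1 : 1 ≤ n := by omega
  set i0 : Fin n := ⟨0, by omega⟩ with hi0
  set i1 : Fin n := ⟨1, by omega⟩ with hi1
  set n1 : Fin n := ⟨n - 1, by omega⟩ with hn1'
  set n2 : Fin n := ⟨n - 2, by omega⟩ with hn2'
  -- y i = x (i+1) for i+1 < n, y n1 = a
  have hyi : ∀ (i : Fin n) (h : (i : ℕ) + 1 < n), y i = x ⟨(i : ℕ) + 1, h⟩ := by
    intro i h; rw [hy]; exact shf_apply_of_lt x a i h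
  have hylast : y n1 = a := by
    rw [hy]; exact shf_apply_last x a n1 (by simp [hn1']; omega)
  -- x' : flip first bit of x
  obtain ⟨x', hx'0, hx'j⟩ :
      ∃ x' : Fin n → Fin 2, x' i0 = 1 - x i0 ∧ ∀ j : Fin n, j ≠ i0 → x' j = x j := by
    refine ⟨fun j => if j = i0 then 1 - x i0 else x j, by simp, fun j hj => by simp [hj]⟩
  -- y = shf n x' (y n1), hence x' ∈ ball y = ball x
  have hyx' : y = shf n x' (y n1) := by
    funext i
    by_cases h : (i : ℕ) + 1 < n
    · rw [shf_apply_of_lt x' (y n1) i h, hx'j _ (by simp [hi0]), hyi i h]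
    · rw [shf_apply_last x' (y n1) i h]
      congr 1
      have := i.isLt
      exact Fin.ext (by simp [hn1']; omega)
  have hx'mem : x' ∈ ball (deBruijnGraph 2 n) 1 x := by
    rw [hb, mem_ball_iff hn1]
    exact Or.inr (Or.inr ⟨y n1, hyx'⟩)
  rw [mem_ball_iff hn1] at hx'mem
  rcases hx'mem with h | ⟨b, hB⟩ | ⟨b, hA⟩
  · -- x' = x impossible
    have := congrFun h i0
    rw [hx'0] at this
    exact two_ne _ this
  · -- Case B : x' = shf n x b ; x = (1-d) d^{n-1}
    have hstep : ∀ (i : Fin n) (h : (i : ℕ) + 1 < n), x' i = x ⟨(i : ℕ) + 1, h⟩ := by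
      intro i h; rw [hB]; exact shf_apply_of_lt x b i h
    obtain ⟨d, hd⟩ : ∃ d : Fin 2, d = x i1 := ⟨_, rfl⟩
    have htail : ∀ (m : ℕ) (h : m < n), 1 ≤ m → x ⟨m, h⟩ = d := by
      intro m
      induction m with
      | zero => intro h h1; omega
      | succ k ih =>
        intro h h1
        rcases Nat.eq_or_lt_of_le h1 with h2 | h2
        · rw [hd]; congr 1; exact Fin.ext (by simp [hi1]; omega)
        · have hk : 1 ≤ k := by omega
          have hkn : k < n := by omega
          have := hstep ⟨k, hkn⟩ (by simpa using h)
          rw [hx'j _ (by simp [hi0]; omega)] at this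
          rw [← this]
          exact ih hkn hk
    have hx0 : x i0 = 1 - d := by
      have h0 : (i0 : ℕ) + 1 < n := by simp [hi0]; omega
      have := hstep i0 h0
      rw [hx'0] at this
      have hxd : x ⟨(i0 : ℕ) + 1, h0⟩ = d := by
        rw [hd, show (⟨(i0 : ℕ) + 1, h0⟩ : Fin n) = i1 from Fin.ext (by simp [hi0, hi1])]
      rw [hxd] at this
      exact two_sub _ _ this
    -- y i = d for i ≠ n1
    have hyd : ∀ (i : Fin n), (i : ℕ) + 1 < n → y i = d := by
      intro i h
      rw [hyi i h]
      exact htail _ _ (by omega)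
    -- witness z
    obtain ⟨z, hz⟩ : ∃ z : Fin n → Fin 2, z = fun i : Fin n => if (i : ℕ) ≤ 1 then 1 - d else d := ⟨_, rfl⟩
    have hzmem : z ∈ ball (deBruijnGraph 2 n) 1 y := by
      rw [← hb, mem_ball_iff hn1]
      refine Or.inr (Or.inr ⟨x n1, funext fun i => ?_⟩)
      by_cases h : (i : ℕ) + 1 < n
      · rw [shf_apply_of_lt z (x n1) i h]
        by_cases h0 : (i : ℕ) = 0
        · have hL : x i = 1 - d := by
            rw [show i = i0 from Fin.ext (by simp [hi0, h0]), hx0]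
          rw [hL, hz]
          simp [h0]
        · rw [htail _ i.isLt (by omega), hz]
          simp only
          rw [if_neg (by simp; omega)]
      · rw [shf_apply_last z (x n1) i h]
        congr 1
        have := i.isLt
        exact Fin.ext (by simp [hn1']; omega)
    rw [mem_ball_iff hn1] at hzmem
    rcases hzmem with h | ⟨e, he⟩ | ⟨e, he⟩
    · have h0 := congrFun h i0
      rw [hyd i0 (by simp [hi0]; omega)] at h0
      have : z i0 = 1 - d := by rw [hz]; simp [hi0]
      rw [this] at h0
      exact two_ne d h0
    · have h0 := congrFun he i0
      rw [shf_apply_of_lt y e i0 (by simp [hi0]; omega)] at h0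
      have h1 : y ⟨(i0 : ℕ) + 1, by simp [hi0]; omega⟩ = d := by
        apply hyd
        simp [hi0]; omega
      rw [h1] at h0
      have : z i0 = 1 - d := by rw [hz]; simp [hi0]
      rw [this] at h0
      exact two_ne d h0
    · have h0 := congrFun he i0
      rw [shf_apply_of_lt z e i0 (by simp [hi0]; omega)] at h0
      have h1 : z ⟨(i0 : ℕ) + 1, by simp [hi0]; omega⟩ = 1 - d := by
        rw [hz]; simp [hi0]
      rw [h1, hyd i0 (by simp [hi0]; omega)] at h0
      exact two_ne d h0.symm
  · -- Case A : x = shf n x' b ; x constant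
    have hstep : ∀ (i : Fin n) (h : (i : ℕ) + 1 < n), x i = x' ⟨(i : ℕ) + 1, h⟩ := by
      intro i h; rw [hA]; exact shf_apply_of_lt x' b i h
    obtain ⟨c, hc⟩ : ∃ c : Fin 2, c = x i0 := ⟨_, rfl⟩
    have hconst : ∀ (m : ℕ) (h : m < n), x ⟨m, h⟩ = c := by
      intro m
      induction m with
      | zero =>
        intro h
        rw [hc, show (⟨0, h⟩ : Fin n) = i0 from Fin.ext (by simp [hi0])]
      | succ k ih =>
        intro h
        have hkn : k < n := by omega
        have := hstep ⟨k, hkn⟩ (by simpa using h)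
        rw [hx'j _ (by simp [hi0])] at this
        rw [← this]
        exact ih hkn
    have hac : a ≠ c := by
      intro hac
      apply hxy
      funext i
      by_cases h : (i : ℕ) + 1 < n
      · rw [hyi i h, hconst _ _, hconst _ _]
      · have hi : i = n1 := Fin.ext (by have := i.isLt; simp [hn1']; omega)
        rw [hi, hylast, hac, hconst _ _]
    have ha : a = 1 - c := two_eq hac
    -- witness w := shf n y (1 - c)
    obtain ⟨w, hw⟩ : ∃ w : Fin n → Fin 2, w = shf n y (1 - c) := ⟨_, rfl⟩
    have hwn2 : w n2 = 1 - c := by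
      rw [hw, shf_apply_of_lt y (1 - c) n2 (by simp [hn2']; omega)]
      have : (⟨(n2 : ℕ) + 1, by simp [hn2']; omega⟩ : Fin n) = n1 :=
        Fin.ext (by simp [hn1', hn2']; omega)
      rw [this, hylast, ha]
    have hwn1 : w n1 = 1 - c := by
      rw [hw]; exact shf_apply_last y (1 - c) n1 (by simp [hn1']; omega)
    have hwmem : w ∈ ball (deBruijnGraph 2 n) 1 x := by
      rw [hb, mem_ball_iff hn1]
      exact Or.inr (Or.inl ⟨1 - c, hw⟩)
    rw [mem_ball_iff hn1] at hwmem
    rcases hwmem with h | ⟨e, he⟩ | ⟨e, he⟩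
    · have h0 := congrFun h n2
      rw [hwn2, hconst _ _] at h0
      exact two_ne c h0
    · have h0 := congrFun he n2
      rw [shf_apply_of_lt x e n2 (by simp [hn2']; omega), hconst _ _, hwn2] at h0
      exact two_ne c h0
    · have h0 := congrFun he n2
      rw [shf_apply_of_lt w e n2 (by simp [hn2']; omega)] at h0
      have : (⟨(n2 : ℕ) + 1, by simp [hn2']; omega⟩ : Fin n) = n1 :=
        Fin.ext (by simp [hn1', hn2']; omega)
      rw [this, hwn1, hconst _ _] at h0
      exact two_ne c h0.symm

lemma twinfree (hn : 3 ≤ n) (x y : Fin n → Fin 2)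
    (hb : ball (deBruijnGraph 2 n) 1 x = ball (deBruijnGraph 2 n) 1 y) : x = y := by
  by_contra hxy
  have hn1 : 1 ≤ n := by omega
  have hy : y ∈ ball (deBruijnGraph 2 n) 1 x := by
    rw [hb, mem_ball_iff hn1]
    exact Or.inl rfl
  rw [mem_ball_iff hn1] at hy
  rcases hy with h | ⟨a, ha⟩ | ⟨a, ha⟩
  · exact hxy h.symm
  · exact aux hn x y hb hxy a ha
  · exact aux hn y x hb.symm (fun h => hxy h.symm) a ha

end DBwork

theorem binary_deBruijn_identifiable (n : ℕ) (hn : 3 ≤ n) :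
    ∃ S : Set (Fin n → Fin 2), IsIdentifyingCode (deBruijnGraph 2 n) 1 S := by
  refine ⟨Set.univ, ?_, ?_⟩
  · intro x
    refine ⟨x, ?_, Set.mem_univ x⟩
    show (deBruijnGraph 2 n).dist x x ≤ 1
    rw [SimpleGraph.dist_self]
    omega
  · intro x y hxy h
    rw [Set.inter_univ, Set.inter_univ] at h
    exact hxy (DBwork.twinfree hn x y h)
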